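/- If the optimal value c of the weighted max-min problem is positive, and N ≥ 2, and every user n with R_n(α) = c/γ_n has some frequency k with α_{nk} > 0 and R_{mk} > 0 for all other users m, then at the optimum all users have equal weighted rates: γ_n · Σ_k α_{nk} R_{nk} = c for every n. More precisely: if some user n has γ_n Σ_k α_{nk} R_{nk} > c while all users have weighted rate ≥ c, and user n has a bin k with α_{nk} > 0 and R_{mk} > 0 for all m ≠ n, then there is a feasible allocation achieving a value strictly greater than c, contradicting optimality. -/

import Mathlib

/-- If `(α, c)` is feasible, user `n` has weighted rate strictly above `c`, and user `n`
has a bin `k` with `α n k > 0` and `R m k > 0` for all `m ≠ n`, then `c` is not optimal: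
there is a feasible point with value strictly greater than `c`. Hence at the optimum all
weighted rates equal `c`. -/
theorem weighted_maxmin_equal_rates (N K : ℕ) (hN : 2 ≤ N)
    (γ : Fin N → ℝ) (hγ : ∀ n, 0 < γ n)
    (R : Fin N → Fin K → ℝ) (hR : ∀ n k, 0 ≤ R n k)
    (α : Fin N → Fin K → ℝ) (c : ℝ)
    (hc : 0 < c)
    (hα0 : ∀ n k, 0 ≤ α n k)
    (hcol : ∀ k, ∑ n, α n k = 1)
    (hrate : ∀ n, c ≤ γ n * ∑ k, α n k * R n k)
    (n : Fin N)
    (hstrict : c < γ n * ∑ k, α n k * R n k)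
    (k : Fin K)
    (hαnk : 0 < α n k)
    (hRmk : ∀ m, m ≠ n → 0 < R m k) :
    ∃ (α' : Fin N → Fin K → ℝ) (c' : ℝ),
      (∀ m j, 0 ≤ α' m j) ∧ (∀ j, ∑ m, α' m j = 1) ∧
      (∀ m, c' ≤ γ m * ∑ j, α' m j * R m j) ∧ c < c' := by
  set S : ℝ := γ n * ∑ j, α n j * R n j - c with hS
  have hSpos : 0 < S := by simp [hS]; linarith
  have hγn := hγ n
  have hRnk := hR n k
  set ε : ℝ := min (α n k) (S / (2 * γ n * (R n k + 1))) with hε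
  have hεpos : 0 < ε := by
    apply lt_min hαnk
    positivity
  have hεle : ε ≤ α n k := min_le_left _ _
  have hεle2 : ε ≤ S / (2 * γ n * (R n k + 1)) := min_le_right _ _
  have hNm1 : (0:ℝ) < (N - 1 : ℕ) := by
    have : 1 ≤ N - 1 := by omega
    exact_mod_cast Nat.lt_of_lt_of_le Nat.zero_lt_one this
  set δ : Fin N → ℝ := fun m => if m = n then -ε else ε / (N - 1 : ℕ) with hδ
  set α' : Fin N → Fin K → ℝ := fun m j => α m j + (if j = k then δ m else 0) with hα'
  have hcard : (Finset.univ.filter (fun m : Fin N => ¬ m = n)).card = N - 1 := by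
    rw [Finset.filter_not, Finset.card_sdiff_of_subset (Finset.filter_subset _ _)]
    have h1 : (Finset.univ.filter (fun m : Fin N => m = n)).card = 1 := by
      simp [Finset.filter_eq']
    rw [h1]
    simp
  have hδsum : ∑ m, δ m = 0 := by
    rw [hδ, Finset.sum_ite, Finset.sum_const, Finset.sum_const, hcard]
    have h1 : (Finset.univ.filter (fun m : Fin N => m = n)).card = 1 := by
      simp [Finset.filter_eq']
    rw [h1]
    have hne' : (N : ℝ) - 1 ≠ 0 := by
      have : (2:ℝ) ≤ N := by exact_mod_cast hN
      linarith
    have hcast : ((N - 1 : ℕ) : ℝ) = (N : ℝ) - 1 := by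
      have : 1 ≤ N := by omega
      push_cast [this]
      ring
    rw [one_smul, nsmul_eq_mul, hcast, mul_div_assoc', mul_comm, mul_div_assoc,
      div_self hne', mul_one]
    ring
  -- rates
  have hrate' : ∀ m, ∑ j, α' m j * R m j = (∑ j, α m j * R m j) + δ m * R m k := by
    intro m
    have h : ∀ j, α' m j * R m j = α m j * R m j + (if j = k then δ m * R m j else 0) := by
      intro j
      by_cases hj : j = k <;> simp [hα', hj] <;> ring
    simp only [h, Finset.sum_add_distrib, Finset.sum_ite_eq' Finset.univ k]
    simp
  have key : ∀ m, c < γ m * ∑ j, α' m j * R m j := by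
    intro m
    rw [hrate' m]
    by_cases h : m = n
    · have hδn : δ m = -ε := by simp [hδ, h]
      rw [hδn, h]
      have h1 : ε * (γ n * R n k) ≤ S / (2 * γ n * (R n k + 1)) * (γ n * R n k) := by
        apply mul_le_mul_of_nonneg_right hεle2
        positivity
      have h2 : S / (2 * γ n * (R n k + 1)) * (γ n * R n k) < S := by
        rw [div_mul_eq_mul_div, div_lt_iff₀ (by positivity)]
        nlinarith [mul_pos hSpos hγn, mul_nonneg (mul_nonneg hSpos.le hγn.le) hRnk]
      have heq : γ n * ((∑ j, α n j * R n j) + -ε * R n k)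
          = γ n * (∑ j, α n j * R n j) - ε * (γ n * R n k) := by ring
      rw [heq]
      linarith
    · have hδm : δ m = ε / (N - 1 : ℕ) := by simp [hδ, h]
      rw [hδm]
      have hp : 0 < ε / (N - 1 : ℕ) * R m k :=
        mul_pos (div_pos hεpos hNm1) (hRmk m h)
      nlinarith [hγ m, hrate m]
  refine ⟨α', Finset.univ.inf' ⟨n, Finset.mem_univ n⟩
      (fun m => γ m * ∑ j, α' m j * R m j), ?_, ?_, ?_, ?_⟩
  · intro m j
    by_cases hj : j = k
    · by_cases hm : m = n
      · simp [hα', hδ, hj, hm]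
        linarith
      · simp [hα', hδ, hj, hm]
        have h1 : 0 ≤ ε / ((N - 1 : ℕ) : ℝ) := le_of_lt (div_pos hεpos hNm1)
        have h2 := hα0 m k
        linarith
    · simp [hα', hj]; exact hα0 m j
  · intro j
    simp only [hα', Finset.sum_add_distrib, hcol j]
    by_cases hj : j = k
    · simp [hj, hδsum]
    · simp [hj]
  · intro m
    exact Finset.inf'_le _ (Finset.mem_univ m)
  · refine (Finset.lt_inf'_iff _).2 ?_
    intro m _
    exact key m
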